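/- Let H_A ⊗ H_B ⊗ H_C be a tensor product of finite-dimensional Hilbert spaces with dim H_B = D. Let U be a unitary acting nontrivially only on H_B ⊗ H_C (i.e., U = 1_A ⊗ V for a unitary V on H_B ⊗ H_C), and let ψ = ψ_{AB} ⊗ ψ_C be a product state across the cut (AB):C. Then the Schmidt rank of Uψ across the cut (AB):C is at most D². -/

import Mathlib

/-- **Schmidt rank growth under a boundary unitary.** Vectors in
`H_A ⊗ H_B ⊗ H_C` (with `dim H_A = a`, `dim H_B = b`, `dim H_C = c`) are encoded
as matrices `Matrix (Fin a × Fin b) (Fin c) ℂ` across the cut `(AB):C`, and the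
Schmidt rank across that cut is the matrix rank. If `U = 1_A ⊗ V` for a unitary
`V` on `H_B ⊗ H_C`, and `ψ = x ⊗ y` is a product state across `(AB):C`
(so `ψ (i,j) k = x (i,j) * y k`), then the Schmidt rank of `Uψ` across `(AB):C`
is at most `b² = (dim H_B)²`. -/
theorem stmt_4 (a b c : ℕ) (V : Matrix (Fin b × Fin c) (Fin b × Fin c) ℂ)
    (hV : V ∈ Matrix.unitaryGroup (Fin b × Fin c) ℂ)
    (x : Fin a × Fin b → ℂ) (y : Fin c → ℂ)
    (Uψ : Matrix (Fin a × Fin b) (Fin c) ℂ)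
    (hUψ : ∀ p k, Uψ p k = ∑ j' : Fin b, ∑ k' : Fin c,
      V (p.2, k) (j', k') * x (p.1, j') * y k') :
    Uψ.rank ≤ b ^ 2 := by
  set A : Matrix (Fin a × Fin b) (Fin b × Fin b) ℂ :=
    fun p q => x (p.1, q.1) * (if q.2 = p.2 then 1 else 0) with hA
  set M : Matrix (Fin b × Fin b) (Fin c) ℂ :=
    fun q k => ∑ k' : Fin c, V (q.2, k) (q.1, k') * y k' with hM
  have hprod : Uψ = A * M := by
    ext p k
    rw [Matrix.mul_apply]; simp only [hA, hM, hUψ]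
    rw [Fintype.sum_prod_type]
    refine Finset.sum_congr rfl fun j' _ => ?_
    rw [Finset.sum_eq_single p.2]
    · simp [Finset.mul_sum, mul_comm, mul_left_comm]
    · intro b' _ hb'; simp [hb']
    · simp
  rw [hprod]
  calc (A * M).rank ≤ M.rank := Matrix.rank_mul_le_right A M
    _ ≤ Fintype.card (Fin b × Fin b) := Matrix.rank_le_card_height M
    _ = b ^ 2 := by simp [sq]
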